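/- Let n = 2m+1 = k with m ≥ 2, t_i = i, and let p_1 > p_2 > … > p_n > 0 be strictly decreasing; set S(p) = ∑_{j=m+1}^{2m+1} 1/p_j. Then there exists ε > 0 such that the mixed searcher strategy that plays the set {j, n−j} with probability 1/(p_j S(p)) for each j = m+2,…,n, plays {m+1, m} with probability 1/(p_{m+1} S(p)) − ε, and plays {m+1, m−1} with probability ε, guarantees expected capture probability at least 1/S(p) against every hiding location i ∈ {1,…,n}. In particular the optimal searcher strategy is not unique. -/

import Mathlib

/-- For `n = 2m+1 = k` with `m ≥ 2`, `t_i = i` and strictly decreasing positive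
capture probabilities `p`, with `S(p) = ∑_{j=m+1}^{2m+1} 1/p_j`, there is an
`ε > 0` such that the mixed searcher strategy playing `{j, n−j}` with
probability `1/(p_j S(p))` for `j = m+2,…,n`, playing `{m+1, m}` with
probability `1/(p_{m+1} S(p)) − ε`, and playing `{m+1, m−1}` with probability
`ε`, guarantees expected capture probability at least `1/S(p)` against every
hiding location `i ∈ {1,…,n}`; hence the optimal searcher strategy is not
unique. -/
theorem searcher_strategy_not_unique (m n : ℕ) (hm : 2 ≤ m) (hn : n = 2 * m + 1)
    (p : ℕ → ℝ)
    (hpos : ∀ i ∈ Finset.Icc 1 n, 0 < p i)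
    (hple : ∀ i ∈ Finset.Icc 1 n, p i ≤ 1)
    (hstrict : ∀ i j : ℕ, 1 ≤ i → i < j → j ≤ n → p j < p i)
    (S : ℝ) (hS : S = ∑ j ∈ Finset.Icc (m + 1) n, 1 / p j) :
    ∃ ε : ℝ, 0 < ε ∧ 0 ≤ 1 / (p (m + 1) * S) - ε ∧
      ∀ i ∈ Finset.Icc 1 n,
        1 / S ≤
          ((∑ j ∈ Finset.Icc (m + 2) n,
              if i ∈ (if j = n then ({n} : Finset ℕ) else {j, n - j})
                then 1 / (p j * S) else 0)
            + (if i ∈ ({m + 1, m} : Finset ℕ) then 1 / (p (m + 1) * S) - ε else 0)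
            + (if i ∈ ({m + 1, m - 1} : Finset ℕ) then ε else 0)) * p i := by
  have hp : ∀ i, 1 ≤ i → i ≤ n → 0 < p i := fun i h1 h2 =>
    hpos i (Finset.mem_Icc.mpr ⟨h1, h2⟩)
  have hS0 : 0 < S := by
    rw [hS]
    apply Finset.sum_pos
    · intro j hj
      rw [Finset.mem_Icc] at hj
      have := hp j (by omega) hj.2
      positivity
    · exact ⟨m + 1, Finset.mem_Icc.mpr ⟨le_refl _, by omega⟩⟩
  have hpm : 0 < p m := hp m (by omega) (by omega)
  have hpm1 : 0 < p (m + 1) := hp (m + 1) (by omega) (by omega)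
  have hltm : p (m + 1) < p m := hstrict m (m + 1) (by omega) (by omega) (by omega)
  set ε : ℝ := 1 / (p (m + 1) * S) - 1 / (p m * S) with hε_def
  have hε : 0 < ε := by
    have h1 : 1 / (p m * S) < 1 / (p (m + 1) * S) := by
      apply one_div_lt_one_div_of_lt
      · positivity
      · exact mul_lt_mul_of_pos_right hltm hS0
    simp only [hε_def]; linarith
  refine ⟨ε, hε, ?_, ?_⟩
  · have h2 : 0 ≤ 1 / (p m * S) := by positivity
    simp only [hε_def]; linarith
  · intro i hi
    rw [Finset.mem_Icc] at hi
    obtain ⟨hi1, hi2⟩ := hi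
    by_cases hin : i = n
    · -- case i = n
      rw [hin]
      rw [Finset.sum_eq_single_of_mem n (Finset.mem_Icc.mpr ⟨by omega, le_refl n⟩)]
      · rw [if_pos (by simp), if_neg (by simp; omega), if_neg (by simp; omega)]
        have hpn : 0 < p n := hp n (by omega) le_rfl
        have : (1 / (p n * S) + 0 + 0) * p n = 1 / S := by
          field_simp
          ring
        rw [this]
      · intro b hb hbn
        rw [Finset.mem_Icc] at hb
        rw [if_neg]
        rw [if_neg hbn]
        simp only [Finset.mem_insert, Finset.mem_singleton]
        omega
    · by_cases hi3 : m + 2 ≤ i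
      · -- case m+2 ≤ i ≤ n-1
        rw [Finset.sum_eq_single_of_mem i (Finset.mem_Icc.mpr ⟨hi3, hi2⟩)]
        · rw [if_neg hin, if_pos (by simp), if_neg (by simp; omega),
            if_neg (by simp; omega)]
          have hpi : 0 < p i := hp i hi1 hi2
          have : (1 / (p i * S) + 0 + 0) * p i = 1 / S := by field_simp; ring
          rw [this]
        · intro b hb hbi
          rw [Finset.mem_Icc] at hb
          rw [if_neg]
          by_cases hbn : b = n
          · rw [if_pos hbn]
            simp only [Finset.mem_singleton]
            omega
          · rw [if_neg hbn]
            simp only [Finset.mem_insert, Finset.mem_singleton]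
            omega
      · by_cases him1 : i = m + 1
        · -- case i = m+1
          rw [him1]
          rw [Finset.sum_eq_zero, if_pos (by simp), if_pos (by simp)]
          · have h1 : ((0 : ℝ) + (1 / (p (m + 1) * S) - ε) + ε) * p (m + 1)
                = 1 / (p (m + 1) * S) * p (m + 1) := by ring
            rw [h1]
            have h2 : 1 / (p (m + 1) * S) * p (m + 1) = 1 / S := by field_simp
            rw [h2]
          · intro b hb
            rw [Finset.mem_Icc] at hb
            rw [if_neg]
            by_cases hbn : b = n
            · rw [if_pos hbn]; simp only [Finset.mem_singleton]; omega
            · rw [if_neg hbn]; simp only [Finset.mem_insert, Finset.mem_singleton]; omega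
        · by_cases him : i = m
          · -- case i = m
            rw [him]
            rw [Finset.sum_eq_zero, if_pos (by simp), if_neg (by simp; omega)]
            · have h1 : (0 : ℝ) + (1 / (p (m + 1) * S) - ε) + 0 = 1 / (p m * S) := by
                rw [hε_def]; ring
              rw [h1]
              have h2 : 1 / (p m * S) * p m = 1 / S := by field_simp
              rw [h2]
            · intro b hb
              rw [Finset.mem_Icc] at hb
              rw [if_neg]
              by_cases hbn : b = n
              · rw [if_pos hbn]; simp only [Finset.mem_singleton]; omega
              · rw [if_neg hbn]; simp only [Finset.mem_insert, Finset.mem_singleton]; omega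
          · -- case 1 ≤ i ≤ m-1
            have hile : i ≤ m - 1 := by omega
            have hpi : 0 < p i := hp i hi1 hi2
            have hpni : 0 < p (n - i) := hp (n - i) (by omega) (by omega)
            have hlt2 : p (n - i) < p i := hstrict i (n - i) hi1 (by omega) (by omega)
            rw [Finset.sum_eq_single_of_mem (n - i) (Finset.mem_Icc.mpr ⟨by omega, by omega⟩)]
            · rw [if_neg (by omega : ¬ n - i = n),
                if_pos (by simp only [Finset.mem_insert, Finset.mem_singleton]; omega),
                if_neg (by simp; omega)]
              have hC : 0 ≤ (if i ∈ ({m + 1, m - 1} : Finset ℕ) then ε else 0) := by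
                split_ifs <;> linarith
              have key : 1 / S ≤ 1 / (p (n - i) * S) * p i := by
                have h1 : 1 / (p (n - i) * S) * p i = p i / (p (n - i) * S) := by ring
                rw [h1, div_le_div_iff₀ hS0 (by positivity)]
                nlinarith
              nlinarith [mul_nonneg hC hpi.le]
            · intro b hb hbi
              rw [Finset.mem_Icc] at hb
              rw [if_neg]
              by_cases hbn : b = n
              · rw [if_pos hbn]; simp only [Finset.mem_singleton]; omega
              · rw [if_neg hbn]; simp only [Finset.mem_insert, Finset.mem_singleton]; omega
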